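/- Let $\alpha_1, \dots, \alpha_n$ be exchangeable random variables (their joint distribution is invariant under permutations) and let $\tau$ be uniform on $[0,1]$ independent of them. Then the smoothed rank $p := (|\{i : \alpha_i < \alpha_n\}| + \tau |\{i : \alpha_i = \alpha_n\}|)/n$ is uniformly distributed on $[0,1]$. -/

import Mathlib

open MeasureTheory ProbabilityTheory

section
open Finset
open scoped ENNReal

namespace SCP

variable {n : ℕ}

noncomputable def Lc (a : Fin n → ℝ) (v : ℝ) : ℕ := (univ.filter fun i => a i < v).card
noncomputable def Ec (a : Fin n → ℝ) (v : ℝ) : ℕ := (univ.filter fun i => a i = v).card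
noncomputable def Cle (a : Fin n → ℝ) (v : ℝ) : ℕ := (univ.filter fun i => a i ≤ v).card

lemma Lc_add_Ec (a : Fin n → ℝ) (v : ℝ) : Lc a v + Ec a v = Cle a v := by
  classical
  rw [Lc, Ec, Cle, ← Finset.card_union_of_disjoint]
  · congr 1
    ext i
    simp [le_iff_lt_or_eq]
  · simp only [Finset.disjoint_filter]
    intro i _ h h'
    exact absurd h' (ne_of_lt h)

lemma Ec_pos (a : Fin n → ℝ) (j : Fin n) : 0 < Ec a (a j) := by
  rw [Ec, Finset.card_pos]; exact ⟨j, by simp⟩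

lemma Cle_le (a : Fin n → ℝ) (v : ℝ) : Cle a v ≤ n := by
  simpa [Cle] using Finset.card_filter_le Finset.univ (fun i => a i ≤ v)

lemma Cle_le_Lc (a : Fin n → ℝ) {v v' : ℝ} (h : v < v') : Cle a v ≤ Lc a v' := by
  apply Finset.card_le_card
  intro i hi
  simp only [Finset.mem_filter, Finset.mem_univ, true_and] at hi ⊢
  exact lt_of_le_of_lt hi h

lemma exists_class (a : Fin n → ℝ) {k : ℕ} (hk : k < n) :
    ∃ j : Fin n, Lc a (a j) ≤ k ∧ k < Cle a (a j) := by
  classical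
  have hne : (univ.filter fun j : Fin n => k < Cle a (a j)).Nonempty := by
    have hn : 0 < n := lt_of_le_of_lt (Nat.zero_le _) hk
    obtain ⟨j, -, hj⟩ := Finset.exists_max_image (univ : Finset (Fin n)) a
      ⟨⟨0, hn⟩, Finset.mem_univ _⟩
    refine ⟨j, Finset.mem_filter.2 ⟨Finset.mem_univ _, lt_of_lt_of_le hk ?_⟩⟩
    rw [Cle]
    have : (univ.filter fun i => a i ≤ a j) = univ := by
      ext i; simp [hj i (Finset.mem_univ i)]
    rw [this, Finset.card_univ, Fintype.card_fin]
  obtain ⟨j, hjmem, hjmin⟩ := Finset.exists_min_image _ a hne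
  have hjk : k < Cle a (a j) := (Finset.mem_filter.1 hjmem).2
  refine ⟨j, ?_, hjk⟩
  by_contra hlt
  push_neg at hlt
  have hpos : 0 < Lc a (a j) := lt_of_le_of_lt (Nat.zero_le _) hlt
  rw [Lc, Finset.card_pos] at hpos
  obtain ⟨i0, hi0⟩ := hpos
  simp only [Finset.mem_filter, Finset.mem_univ, true_and] at hi0
  obtain ⟨w, hwmem, hwmax⟩ := Finset.exists_max_image (univ.filter fun i => a i < a j) a
    ⟨i0, Finset.mem_filter.2 ⟨Finset.mem_univ _, hi0⟩⟩
  have hwlt : a w < a j := (Finset.mem_filter.1 hwmem).2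
  have hsub : Lc a (a j) ≤ Cle a (a w) := by
    apply Finset.card_le_card
    intro i hi
    simp only [Finset.mem_filter, Finset.mem_univ, true_and] at hi ⊢
    exact hwmax i (Finset.mem_filter.2 ⟨Finset.mem_univ _, hi⟩)
  have hwk : k < Cle a (a w) := lt_of_lt_of_le hlt hsub
  have : a j ≤ a w := hjmin w (Finset.mem_filter.2 ⟨Finset.mem_univ _, hwk⟩)
  exact absurd hwlt (not_lt.2 this)

lemma volume_preimage_affine {c d : ℝ} (hd : 0 < d) (B : Set ℝ) :
    volume ((fun t => c + t * d) ⁻¹' B) = ENNReal.ofReal d⁻¹ * volume B := by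
  have h1 : (fun t : ℝ => c + t * d) ⁻¹' B = (· * d) ⁻¹' ((c + ·) ⁻¹' B) := rfl
  rw [h1, Real.volume_preimage_mul_right (ne_of_gt hd), measure_preimage_add,
    abs_of_pos (inv_pos.2 hd)]

lemma affine_inter_Icc {c d : ℝ} (hd : 0 < d) (s : Set ℝ) :
    (fun t : ℝ => c + t * d) ⁻¹' s ∩ Set.Icc (0:ℝ) 1
      = (fun t : ℝ => c + t * d) ⁻¹' (s ∩ Set.Icc c (c + d)) := by
  ext t
  simp only [Set.mem_inter_iff, Set.mem_preimage, Set.mem_Icc]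
  constructor
  · rintro ⟨hs, h0, h1⟩
    exact ⟨hs, by nlinarith, by nlinarith⟩
  · rintro ⟨hs, h0, h1⟩
    exact ⟨hs, by nlinarith, by nlinarith⟩

lemma affine_piece {c d : ℝ} (hd : 0 < d) (s : Set ℝ) :
    volume ((fun t : ℝ => c + t * d) ⁻¹' s ∩ Set.Icc (0:ℝ) 1)
      = ENNReal.ofReal d⁻¹ * volume (s ∩ Set.Ico c (c + d)) := by
  rw [affine_inter_Icc hd, volume_preimage_affine hd]
  congr 1
  refine measure_congr ?_
  exact Filter.EventuallyEq.inter (Filter.EventuallyEq.refl _ _) Ico_ae_eq_Icc.symm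

/-- The fundamental deterministic tiling identity. -/
lemma det_sum (hn : 0 < n) (a : Fin n → ℝ) {s : Set ℝ} (hs : MeasurableSet s) :
    ∑ j : Fin n,
        volume ((fun t : ℝ => (((Lc a (a j) : ℕ) : ℝ) + t * ((Ec a (a j) : ℕ) : ℝ)) / n) ⁻¹' s
          ∩ Set.Icc (0:ℝ) 1)
      = n * volume (s ∩ Set.Icc (0:ℝ) 1) := by
  classical
  have hnR : (0:ℝ) < n := by exact_mod_cast hn
  set F : ℝ → ℝ≥0∞ := fun v =>
    volume ((fun t : ℝ => (((Lc a v : ℕ) : ℝ) + t * ((Ec a v : ℕ) : ℝ)) / n) ⁻¹' s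
      ∩ Set.Icc (0:ℝ) 1) with hF
  -- group by value
  have hgroup : ∑ j : Fin n, F (a j)
      = ∑ v ∈ univ.image a, (Ec a v) • F v := by
    rw [← Finset.sum_fiberwise_of_maps_to' (fun j _ => Finset.mem_image_of_mem a (mem_univ j)) F]
    refine Finset.sum_congr rfl fun v _ => ?_
    rw [Finset.sum_const]
    rfl
  rw [hgroup]
  -- per-class value
  have hclass : ∀ v ∈ univ.image a,
      (Ec a v) • F v = n * volume (s ∩
        Set.Ico (((Lc a v : ℕ) : ℝ)/n) (((Lc a v : ℕ) : ℝ)/n + ((Ec a v : ℕ) : ℝ)/n)) := by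
    intro v hv
    obtain ⟨j, -, hj⟩ := Finset.mem_image.1 hv
    have hE : 0 < Ec a v := hj ▸ Ec_pos a j
    have hER : (0:ℝ) < (Ec a v : ℝ) := by exact_mod_cast hE
    have hd : (0:ℝ) < (Ec a v : ℝ)/n := by positivity
    have hfun : (fun t : ℝ => (((Lc a v : ℕ) : ℝ) + t * ((Ec a v : ℕ) : ℝ)) / n)
        = fun t : ℝ => ((Lc a v : ℕ) : ℝ)/n + t * (((Ec a v : ℕ) : ℝ)/n) := by
      funext t; ring
    rw [hF]
    simp only [hfun]
    rw [affine_piece hd]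
    rw [nsmul_eq_mul, ← mul_assoc]
    congr 1
    have : ((Ec a v : ℝ)/n)⁻¹ = (n : ℝ)/(Ec a v : ℝ) := by
      field_simp
    rw [this, ENNReal.ofReal_div_of_pos hER, ENNReal.ofReal_natCast, ENNReal.ofReal_natCast,
      ENNReal.mul_div_cancel (by exact_mod_cast hE.ne') (by simp)]
  rw [Finset.sum_congr rfl hclass, ← Finset.mul_sum]
  congr 1
  -- sum of disjoint pieces
  have hdisj : Set.PairwiseDisjoint (↑(univ.image a)) (fun v => s ∩
      Set.Ico (((Lc a v : ℕ) : ℝ)/n) (((Lc a v : ℕ) : ℝ)/n + ((Ec a v : ℕ) : ℝ)/n)) := by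
    intro v hv v' hv' hne
    have key : ∀ x y : ℝ, x < y →
        Disjoint (s ∩ Set.Ico (((Lc a x : ℕ) : ℝ)/n) (((Lc a x : ℕ) : ℝ)/n + ((Ec a x : ℕ) : ℝ)/n))
          (s ∩ Set.Ico (((Lc a y : ℕ) : ℝ)/n) (((Lc a y : ℕ) : ℝ)/n + ((Ec a y : ℕ) : ℝ)/n)) := by
      intro x y hxy
      have h1 : Lc a x + Ec a x ≤ Lc a y := (Lc_add_Ec a x) ▸ Cle_le_Lc a hxy
      have h1R : ((Lc a x : ℝ) + (Ec a x : ℝ)) ≤ (Lc a y : ℝ) := by exact_mod_cast h1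
      rw [Set.disjoint_left]
      rintro u ⟨-, hu1⟩ ⟨-, hu2⟩
      have hA : u < ((Lc a x : ℕ) : ℝ)/n + ((Ec a x : ℕ) : ℝ)/n := hu1.2
      have hB : ((Lc a y : ℕ) : ℝ)/n ≤ u := hu2.1
      have : ((Lc a x : ℝ) + (Ec a x : ℝ))/n ≤ ((Lc a y : ℝ))/n := by
        exact div_le_div_of_nonneg_right h1R hnR.le |>.trans_eq rfl
      rw [add_div] at this
      linarith
    rcases lt_or_gt_of_ne hne with h | h
    · exact key v v' h
    · exact (key v' v h).symm
  have hunion : (⋃ v ∈ (univ.image a : Finset ℝ), (s ∩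
      Set.Ico (((Lc a v : ℕ) : ℝ)/n) (((Lc a v : ℕ) : ℝ)/n + ((Ec a v : ℕ) : ℝ)/n)))
      = s ∩ Set.Ico (0:ℝ) 1 := by
    ext u
    simp only [Set.mem_iUnion, Set.mem_inter_iff, Set.mem_Ico, exists_prop]
    constructor
    · rintro ⟨v, hv, hus, hlo, hhi⟩
      refine ⟨hus, ?_, ?_⟩
      · have : (0:ℝ) ≤ ((Lc a v : ℕ) : ℝ)/n := by positivity
        linarith
      · have h1 : Lc a v + Ec a v ≤ n := (Lc_add_Ec a v) ▸ Cle_le a v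
        have h1R : ((Lc a v : ℝ) + (Ec a v : ℝ)) ≤ (n : ℝ) := by exact_mod_cast h1
        have : ((Lc a v : ℝ))/n + ((Ec a v : ℝ))/n ≤ 1 := by
          rw [← add_div]
          exact (div_le_one hnR).2 h1R
        linarith
    · rintro ⟨hus, h0, h1⟩
      set k := ⌊(n : ℝ) * u⌋₊ with hk
      have hnu0 : (0:ℝ) ≤ n * u := by positivity
      have hkn : k < n := by
        rw [hk, Nat.floor_lt hnu0]
        calc (n:ℝ) * u < n * 1 := by
              exact mul_lt_mul_of_pos_left h1 hnR
          _ = n := mul_one _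
      obtain ⟨j, hL, hC⟩ := exists_class a hkn
      refine ⟨a j, Finset.mem_image_of_mem a (mem_univ j), hus, ?_, ?_⟩
      · have h2 : (Lc a (a j) : ℝ) ≤ k := by exact_mod_cast hL
        have h3 : (k : ℝ) ≤ n * u := Nat.floor_le hnu0
        rw [div_le_iff₀ hnR]
        linarith [mul_comm u (n:ℝ)]
      · have h4 : (n:ℝ) * u < k + 1 := Nat.lt_floor_add_one _
        have h5 : (k:ℝ) + 1 ≤ (Lc a (a j) : ℝ) + (Ec a (a j) : ℝ) := by
          have : k + 1 ≤ Lc a (a j) + Ec a (a j) := by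
            rw [Lc_add_Ec]; omega
          exact_mod_cast this
        rw [← add_div, lt_div_iff₀ hnR]
        linarith [mul_comm u (n:ℝ)]
  have hmeas : ∀ v ∈ (univ.image a : Finset ℝ), MeasurableSet (s ∩
      Set.Ico (((Lc a v : ℕ) : ℝ)/n) (((Lc a v : ℕ) : ℝ)/n + ((Ec a v : ℕ) : ℝ)/n)) :=
    fun v _ => hs.inter measurableSet_Ico
  rw [← measure_biUnion_finset hdisj hmeas, hunion]
  refine measure_congr ?_
  exact Filter.EventuallyEq.inter (Filter.EventuallyEq.refl _ _) Ico_ae_eq_Icc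



noncomputable def H (j : Fin n) : (Fin n → ℝ) × ℝ → ℝ :=
  fun p => ((Lc p.1 (p.1 j) : ℝ) + p.2 * (Ec p.1 (p.1 j) : ℝ)) / n

lemma measurable_LcR (j : Fin n) : Measurable fun a : Fin n → ℝ => ((Lc a (a j) : ℕ) : ℝ) := by
  have h : (fun a : Fin n → ℝ => ((Lc a (a j) : ℕ) : ℝ))
      = fun a => ∑ i : Fin n, if a i < a j then (1:ℝ) else 0 := by
    funext a
    rw [Lc, Finset.card_filter]
    push_cast
    rfl
  rw [h]
  exact Finset.measurable_sum _ fun i _ =>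
    Measurable.ite (measurableSet_lt (measurable_pi_apply i) (measurable_pi_apply j))
      measurable_const measurable_const

lemma measurable_EcR (j : Fin n) : Measurable fun a : Fin n → ℝ => ((Ec a (a j) : ℕ) : ℝ) := by
  have h : (fun a : Fin n → ℝ => ((Ec a (a j) : ℕ) : ℝ))
      = fun a => ∑ i : Fin n, if a i = a j then (1:ℝ) else 0 := by
    funext a
    rw [Ec, Finset.card_filter]
    push_cast
    rfl
  rw [h]
  exact Finset.measurable_sum _ fun i _ =>
    Measurable.ite (measurableSet_eq_fun (measurable_pi_apply i) (measurable_pi_apply j))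
      measurable_const measurable_const

lemma measurable_H (j : Fin n) : Measurable (H j) := by
  unfold H
  exact (((measurable_LcR j).comp measurable_fst).add
    (measurable_snd.mul ((measurable_EcR j).comp measurable_fst))).div_const _

lemma Lc_comp (a : Fin n → ℝ) (σ : Equiv.Perm (Fin n)) (v : ℝ) : Lc (a ∘ σ) v = Lc a v := by
  rw [Lc, Lc, Finset.card_filter, Finset.card_filter]
  exact Equiv.sum_comp σ fun i => if a i < v then 1 else 0

lemma Ec_comp (a : Fin n → ℝ) (σ : Equiv.Perm (Fin n)) (v : ℝ) : Ec (a ∘ σ) v = Ec a v := by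
  rw [Ec, Ec, Finset.card_filter, Finset.card_filter]
  exact Equiv.sum_comp σ fun i => if a i = v then 1 else 0

lemma H_comp (j₀ j : Fin n) (a : Fin n → ℝ) (t : ℝ) :
    H j₀ (a ∘ (Equiv.swap j₀ j), t) = H j (a, t) := by
  unfold H
  simp only [Lc_comp, Ec_comp, Function.comp_apply, Equiv.swap_apply_left]



end SCP

/-- Validity of a smoothed conformal p-value: if the conformity scores `α_1, …, α_n` are
exchangeable and `τ` is uniform on `[0,1]` and independent of them, then the smoothed rank
`p := (|{i : α_i < α_n}| + τ |{i : α_i = α_n}|)/n` is uniform on `[0,1]`. -/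
theorem smoothed_conformal_pvalue_uniform {Ω : Type*} [MeasurableSpace Ω]
    (P : Measure Ω) [IsProbabilityMeasure P]
    (n : ℕ) (hn : 0 < n) (α : Ω → Fin n → ℝ) (hα : Measurable α)
    (τ : Ω → ℝ) (hτm : Measurable τ)
    (hτ : P.map τ = volume.restrict (Set.Icc (0 : ℝ) 1))
    (hindep : IndepFun α τ P)
    (hexch : ∀ σ : Equiv.Perm (Fin n), P.map (fun ω => α ω ∘ σ) = P.map α) :
    P.map (fun ω =>
        (((Finset.univ.filter fun i => α ω i < α ω ⟨n - 1, by omega⟩).card : ℝ)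
          + τ ω * ((Finset.univ.filter fun i => α ω i = α ω ⟨n - 1, by omega⟩).card : ℝ)) / n)
      = volume.restrict (Set.Icc (0 : ℝ) 1) := by
  classical
  set j₀ : Fin n := ⟨n - 1, by omega⟩ with hj₀
  set ν : Measure ℝ := volume.restrict (Set.Icc (0 : ℝ) 1) with hν
  set μ : Measure (Fin n → ℝ) := P.map α with hμ
  haveI hμP : IsProbabilityMeasure μ := Measure.isProbabilityMeasure_map hα.aemeasurable
  haveI hνP : IsProbabilityMeasure ν := by
    constructor
    rw [hν, Measure.restrict_apply_univ, Real.volume_Icc]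
    norm_num
  have hpairm : Measurable fun ω => (α ω, τ ω) := hα.prodMk hτm
  have hpair : P.map (fun ω => (α ω, τ ω)) = μ.prod ν := by
    rw [hμ, ← hτ]
    exact (ProbabilityTheory.indepFun_iff_map_prod_eq_prod_map_map
      hα.aemeasurable hτm.aemeasurable).mp hindep
  -- reduce the goal to the pushforward of the product measure
  have hgoal : P.map (fun ω =>
        (((Finset.univ.filter fun i => α ω i < α ω ⟨n - 1, by omega⟩).card : ℝ)
          + τ ω * ((Finset.univ.filter fun i => α ω i = α ω ⟨n - 1, by omega⟩).card : ℝ)) / n)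
      = (μ.prod ν).map (SCP.H j₀) := by
    have hfun : (fun ω =>
        (((Finset.univ.filter fun i => α ω i < α ω ⟨n - 1, by omega⟩).card : ℝ)
          + τ ω * ((Finset.univ.filter fun i => α ω i = α ω ⟨n - 1, by omega⟩).card : ℝ)) / n)
        = (SCP.H j₀) ∘ (fun ω => (α ω, τ ω)) := rfl
    rw [hfun, ← Measure.map_map (SCP.measurable_H j₀) hpairm, hpair]
  rw [hgoal]
  -- step C: all indices give the same law
  have hsame : ∀ j : Fin n, (μ.prod ν).map (SCP.H j) = (μ.prod ν).map (SCP.H j₀) := by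
    intro j
    set σ : Equiv.Perm (Fin n) := Equiv.swap j₀ j with hσ
    have hcomp : Measurable fun a : Fin n → ℝ => a ∘ σ :=
      measurable_pi_lambda _ fun i => measurable_pi_apply (σ i)
    have hpair' : P.map (fun ω => (α ω ∘ σ, τ ω)) = μ.prod ν := by
      have hασ : Measurable fun ω => α ω ∘ σ := hcomp.comp hα
      have hind' : IndepFun (fun ω => α ω ∘ σ) τ P := by
        have := hindep.comp hcomp measurable_id
        exact this
      have := (ProbabilityTheory.indepFun_iff_map_prod_eq_prod_map_map
        hασ.aemeasurable hτm.aemeasurable).mp hind'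
      rw [this, hexch σ, hτ, hμ, hν]
    calc (μ.prod ν).map (SCP.H j)
        = (P.map (fun ω => (α ω, τ ω))).map (SCP.H j) := by rw [hpair]
      _ = P.map ((SCP.H j) ∘ fun ω => (α ω, τ ω)) :=
          Measure.map_map (SCP.measurable_H j) hpairm
      _ = P.map ((SCP.H j₀) ∘ fun ω => (α ω ∘ σ, τ ω)) := by
          congr 1
          funext ω
          exact (SCP.H_comp j₀ j (α ω) (τ ω)).symm
      _ = (P.map (fun ω => (α ω ∘ σ, τ ω))).map (SCP.H j₀) :=
          (Measure.map_map (SCP.measurable_H j₀) ((hcomp.comp hα).prodMk hτm)).symm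
      _ = (μ.prod ν).map (SCP.H j₀) := by rw [hpair']
  -- step D: averaging over indices gives the uniform law
  refine Measure.ext fun s hs => ?_
  have hn0 : ((n : ℝ≥0∞)) ≠ 0 := by exact_mod_cast Nat.cast_ne_zero.2 hn.ne'
  have hntop : ((n : ℝ≥0∞)) ≠ ∞ := ENNReal.natCast_ne_top n
  rw [← ENNReal.mul_right_inj hn0 hntop]
  have h2 : (n : ℝ≥0∞) * (μ.prod ν).map (SCP.H j₀) s
      = ∑ j : Fin n, ((μ.prod ν).map (SCP.H j)) s := by
    rw [Finset.sum_congr rfl fun j _ => by rw [hsame j]]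
    rw [Finset.sum_const, Finset.card_univ, Fintype.card_fin, nsmul_eq_mul]
  rw [h2]
  have h1 : ∀ j : Fin n, ((μ.prod ν).map (SCP.H j)) s
      = ∫⁻ a, ν (Prod.mk a ⁻¹' ((SCP.H j) ⁻¹' s)) ∂μ := by
    intro j
    rw [Measure.map_apply (SCP.measurable_H j) hs, Measure.prod_apply ((SCP.measurable_H j) hs)]
  rw [Finset.sum_congr rfl fun j _ => h1 j,
    ← MeasureTheory.lintegral_finset_sum _
      (fun j _ => measurable_measure_prodMk_left ((SCP.measurable_H j) hs))]
  have hdet : ∀ a : Fin n → ℝ,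
      ∑ j : Fin n, ν (Prod.mk a ⁻¹' ((SCP.H j) ⁻¹' s)) = n * ν s := by
    intro a
    have hrw : ∀ j : Fin n, ν (Prod.mk a ⁻¹' ((SCP.H j) ⁻¹' s))
        = volume ((fun t : ℝ =>
            (((SCP.Lc a (a j) : ℕ) : ℝ) + t * ((SCP.Ec a (a j) : ℕ) : ℝ)) / n) ⁻¹' s
          ∩ Set.Icc (0:ℝ) 1) := by
      intro j
      rw [hν, Measure.restrict_apply]
      · rfl
      · exact (SCP.measurable_H j).comp measurable_prodMk_left hs
    rw [Finset.sum_congr rfl fun j _ => hrw j, SCP.det_sum hn a hs, hν,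
      Measure.restrict_apply hs]
  rw [lintegral_congr hdet, lintegral_const, measure_univ, mul_one]

end
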